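/- Let C be a closed convex cone in ℝ^n, let c ∈ ℝ^n, and let a be a nonzero element of the dual cone C†. Define f_p = sup{ γ ∈ ℝ : c − γ a ∈ C } and f_d = inf{ cᵀv : aᵀv = 1, v ∈ C† }. Then f_p = f_d (strong duality holds), where sup and inf are taken in the extended reals. -/

import Mathlib

open scoped InnerProductSpace
open Filter Topology

noncomputable section Stmt7Aux

private lemma stmt7_inner_eq {n : ℕ} (x y : EuclideanSpace ℝ (Fin n)) :
    ⟪x, y⟫_ℝ = ∑ i, x i * y i := by
  simp [PiLp.inner_apply, RCLike.inner_apply, conj_trivial]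
  exact Finset.sum_congr rfl fun i _ => mul_comm _ _

/-- The inner dual cone of a set (compatibility definition). -/
def Set.innerDualCone {H : Type*} [NormedAddCommGroup H] [InnerProductSpace ℝ H] (s : Set H) :
    ConvexCone ℝ H where
  carrier := {y | ∀ x ∈ s, 0 ≤ ⟪x, y⟫_ℝ}
  smul_mem' c hc y hy x hx := by
    rw [real_inner_smul_right]; exact mul_nonneg hc.le (hy x hx)
  add_mem' u hu v hv x hx := by
    rw [inner_add_right]; exact add_nonneg (hu x hx) (hv x hx)

theorem mem_innerDualCone {H : Type*} [NormedAddCommGroup H] [InnerProductSpace ℝ H]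
    (y : H) (s : Set H) : y ∈ s.innerDualCone ↔ ∀ x ∈ s, 0 ≤ ⟪x, y⟫_ℝ := Iff.rfl

theorem pointed_innerDualCone {H : Type*} [NormedAddCommGroup H] [InnerProductSpace ℝ H]
    (s : Set H) : (0 : H) ∈ s.innerDualCone := fun x _ => by simp

private def stmt7_toProper {H : Type*} [NormedAddCommGroup H] [InnerProductSpace ℝ H]
    (K : ConvexCone ℝ H) (h0 : (0 : H) ∈ K) (hc : IsClosed (K : Set H)) : ProperCone ℝ H where
  carrier := K
  add_mem' ha hb := K.add_mem ha hb
  zero_mem' := h0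
  smul_mem' c x hx := by
    rcases eq_or_lt_of_le c.2 with h | h
    · have hc0 : c = 0 := NNReal.coe_eq_zero.mp h.symm
      subst hc0
      simpa using h0
    · exact K.smul_mem h hx
  isClosed' := hc

private theorem stmt7_zero_mem {H : Type*} [NormedAddCommGroup H] [InnerProductSpace ℝ H]
    (K : ConvexCone ℝ H) (ne : (K : Set H).Nonempty) (hc : IsClosed (K : Set H)) :
    (0 : H) ∈ K := by
  obtain ⟨k, hk⟩ := ne
  have ht : Filter.Tendsto (fun t : ℝ => t • k) (𝓝[>] 0) (𝓝 ((0 : ℝ) • k)) :=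
    ((continuous_id.smul continuous_const).tendsto (0 : ℝ)).mono_left nhdsWithin_le_nhds
  rw [zero_smul] at ht
  exact hc.mem_of_tendsto ht (eventually_nhdsWithin_of_forall fun t htt => K.smul_mem htt hk)

theorem ConvexCone.hyperplane_separation_of_nonempty_of_isClosed_of_nmem {H : Type*}
    [NormedAddCommGroup H] [InnerProductSpace ℝ H] [CompleteSpace H]
    (K : ConvexCone ℝ H) (ne : (K : Set H).Nonempty) (hc : IsClosed (K : Set H)) {b : H}
    (disj : b ∉ K) : ∃ y : H, (∀ x : H, x ∈ K → 0 ≤ ⟪x, y⟫_ℝ) ∧ ⟪y, b⟫_ℝ < 0 := by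
  obtain ⟨y, hy, hyb⟩ :=
    ProperCone.hyperplane_separation' (stmt7_toProper K (stmt7_zero_mem K ne hc) hc) (x₀ := b) disj
  exact ⟨y, fun x hx => hy x hx, by rw [real_inner_comm]; exact hyb⟩

theorem ConvexCone.innerDualCone_of_innerDualCone_eq_self {H : Type*}
    [NormedAddCommGroup H] [InnerProductSpace ℝ H] [CompleteSpace H]
    (K : ConvexCone ℝ H) (ne : (K : Set H).Nonempty) (hc : IsClosed (K : Set H)) :
    ((K : Set H).innerDualCone : Set H).innerDualCone = K := by
  ext x
  constructor
  · intro hx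
    by_contra hxK
    obtain ⟨y, hy, hyx⟩ := K.hyperplane_separation_of_nonempty_of_isClosed_of_nmem ne hc hxK
    have := hx y hy
    linarith
  · intro hx y hy
    rw [real_inner_comm]; exact hy x hx

lemma WithLp.prod_lipschitzWith_equiv (p : ENNReal) [Fact (1 ≤ p)] (α β : Type*)
    [PseudoEMetricSpace α] [PseudoEMetricSpace β] :
    LipschitzWith 1 (WithLp.equiv p (α × β)) :=
  WithLp.prod_lipschitzWith_ofLp p α β

set_option maxHeartbeats 1000000 in
private theorem stmt7_aux (n : ℕ) (C : Set (EuclideanSpace ℝ (Fin n)))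
    (hclosed : IsClosed C) (hconv : Convex ℝ C) (h0 : (0 : EuclideanSpace ℝ (Fin n)) ∈ C)
    (hcone : ∀ x ∈ C, ∀ t : ℝ, 0 ≤ t → t • x ∈ C)
    (c a : EuclideanSpace ℝ (Fin n))
    (ha : ∀ x ∈ C, 0 ≤ ∑ i, a i * x i) (ha0 : a ≠ 0) :
    sSup ((fun γ : ℝ => (γ : EReal)) '' {γ : ℝ | c - γ • a ∈ C}) =
    sInf ((fun v : EuclideanSpace ℝ (Fin n) => ((∑ i, c i * v i : ℝ) : EReal)) ''
      {v : EuclideanSpace ℝ (Fin n) |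
        (∑ i, a i * v i) = 1 ∧ ∀ x ∈ C, 0 ≤ ∑ i, v i * x i}) := by
  classical
  set Pim : Set EReal := (fun γ : ℝ => (γ : EReal)) '' {γ : ℝ | c - γ • a ∈ C} with hPim
  set S : Set EReal := (fun v : EuclideanSpace ℝ (Fin n) => ((∑ i, c i * v i : ℝ) : EReal)) ''
      {v : EuclideanSpace ℝ (Fin n) |
        (∑ i, a i * v i) = 1 ∧ ∀ x ∈ C, 0 ≤ ∑ i, v i * x i} with hS
  -- positivity of ‖a‖²
  have hna : 0 < ∑ i, a i * a i := by
    obtain ⟨i, hi⟩ : ∃ i, a i ≠ 0 := by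
      by_contra h
      push_neg at h
      exact ha0 (by ext i; exact h i)
    exact Finset.sum_pos' (fun j _ => mul_self_nonneg _)
      ⟨i, Finset.mem_univ i, mul_self_pos.mpr hi⟩
  -- the canonical dual feasible point
  set v0 : EuclideanSpace ℝ (Fin n) := (∑ i, a i * a i)⁻¹ • a with hv0
  have hv0a : ∑ i, a i * v0 i = 1 := by
    have : ∑ i, a i * v0 i = (∑ i, a i * a i)⁻¹ * ∑ i, a i * a i := by
      rw [Finset.mul_sum]
      refine Finset.sum_congr rfl fun i _ => ?_
      show a i * ((∑ i, a i * a i)⁻¹ * a i) = _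
      ring
    rw [this, inv_mul_cancel₀ hna.ne']
  have hv0mem : v0 ∈ {v : EuclideanSpace ℝ (Fin n) |
      (∑ i, a i * v i) = 1 ∧ ∀ x ∈ C, 0 ≤ ∑ i, v i * x i} := by
    refine ⟨hv0a, fun x hx => ?_⟩
    have h1 : 0 ≤ (∑ i, a i * a i)⁻¹ * ∑ i, a i * x i :=
      mul_nonneg (inv_nonneg.mpr hna.le) (ha x hx)
    have h2 : ∑ i, v0 i * x i = (∑ i, a i * a i)⁻¹ * ∑ i, a i * x i := by
      rw [Finset.mul_sum]
      refine Finset.sum_congr rfl fun i _ => ?_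
      show (∑ i, a i * a i)⁻¹ * a i * x i = _
      ring
    rw [h2]; exact h1
  set q : ℝ := ∑ i, c i * v0 i with hq
  have hqS : ((q : ℝ) : EReal) ∈ S := ⟨v0, hv0mem, rfl⟩
  -- convex cone structure
  have haddC : ∀ x ∈ C, ∀ y ∈ C, x + y ∈ C := by
    intro x hx y hy
    have h2 : (1/2 : ℝ) • x + (1/2 : ℝ) • y ∈ C :=
      hconv hx hy (by norm_num) (by norm_num) (by norm_num)
    have := hcone _ h2 2 (by norm_num)
    simpa [smul_add, smul_smul] using this
  set Kc : ConvexCone ℝ (EuclideanSpace ℝ (Fin n)) :=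
    ⟨C, fun t ht x hx => hcone x hx t ht.le, fun x hx y hy => haddC x hx y hy⟩ with hKcdef
  have hKc : (Kc : Set (EuclideanSpace ℝ (Fin n))) = C := rfl
  have hbip := Kc.innerDualCone_of_innerDualCone_eq_self ⟨0, h0⟩ hclosed
  have hbipolar : ∀ z : EuclideanSpace ℝ (Fin n),
      (∀ v ∈ C.innerDualCone, 0 ≤ ⟪v, z⟫_ℝ) → z ∈ C := by
    intro z hz
    have hz' : z ∈ ((C.innerDualCone : Set _).innerDualCone : ConvexCone ℝ _) :=
      (mem_innerDualCone _ _).mpr hz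
    rw [hKc] at hbip
    rw [← hKc, SetLike.mem_coe, ← hbip]
    exact hz'
  -- the linear test map into the plane
  set L : EuclideanSpace ℝ (Fin n) →ₗ[ℝ] WithLp 2 (ℝ × ℝ) :=
    ((WithLp.linearEquiv 2 ℝ (ℝ × ℝ)).symm : (ℝ × ℝ) →ₗ[ℝ] WithLp 2 (ℝ × ℝ)).comp
      ((innerₛₗ ℝ a).prod (innerₛₗ ℝ c)) with hLdef
  have hLfst : ∀ v, (L v).fst = ⟪a, v⟫_ℝ := fun v => rfl
  have hLsnd : ∀ v, (L v).snd = ⟪c, v⟫_ℝ := fun v => rfl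
  set Dcl : ConvexCone ℝ (WithLp 2 (ℝ × ℝ)) :=
    (ConvexCone.map L (Set.innerDualCone C)).closure with hDcl
  have hne : (Dcl : Set (WithLp 2 (ℝ × ℝ))).Nonempty :=
    ⟨L 0, by rw [hDcl, ConvexCone.coe_closure]
             exact subset_closure
               (by rw [ConvexCone.coe_map]; exact ⟨0, pointed_innerDualCone C, rfl⟩)⟩
  have hcl : IsClosed (Dcl : Set (WithLp 2 (ℝ × ℝ))) := by
    rw [hDcl, ConvexCone.coe_closure]; exact isClosed_closure
  -- begin the two inequalities
  refine le_antisymm ?_ ?_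
  · -- weak duality
    refine sSup_le ?_
    rintro w ⟨γ, hγ, rfl⟩
    refine le_sInf ?_
    rintro w' ⟨v, ⟨hva, hvC⟩, rfl⟩
    have h1 : 0 ≤ ∑ i, v i * (c - γ • a) i := hvC _ hγ
    have h2 : ∑ i, v i * (c - γ • a) i = (∑ i, v i * c i) - γ * ∑ i, v i * a i := by
      simp [PiLp.sub_apply, PiLp.smul_apply, smul_eq_mul, mul_sub, Finset.sum_sub_distrib,
        Finset.mul_sum, mul_left_comm]
    have h3 : ∑ i, v i * c i = ∑ i, c i * v i :=
      Finset.sum_congr rfl fun i _ => mul_comm _ _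
    have h4 : ∑ i, v i * a i = ∑ i, a i * v i :=
      Finset.sum_congr rfl fun i _ => mul_comm _ _
    have h5 : γ ≤ ∑ i, c i * v i := by
      rw [h2, h3, h4, hva] at h1; linarith
    exact EReal.coe_le_coe_iff.mpr h5
  · -- strong duality
    by_contra hcon
    push_neg at hcon
    obtain ⟨r, hr1, hr2⟩ := EReal.exists_between_coe_real hcon
    have claim : ∃ s t : ℝ, s • a + t • c ∈ C ∧ s + r * t < 0 := by
      by_cases hb : ((WithLp.equiv 2 (ℝ × ℝ)).symm (1, r)) ∈ Dcl
      · exfalso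
        obtain ⟨r', hrr', hr'⟩ := EReal.exists_between_coe_real hr2
        have hrr : r < r' := by exact_mod_cast hrr'
        set δ : ℝ := min (1/2) ((r' - r)/(2*(1+|r|))) with hδdef
        have habs : (0:ℝ) ≤ |r| := abs_nonneg r
        have hδpos : 0 < δ := lt_min (by norm_num) (div_pos (by linarith) (by positivity))
        have hδhalf : δ ≤ 1/2 := min_le_left _ _
        have hδr : 2 * (1 + |r|) * δ ≤ r' - r := by
          have hm := min_le_right (1/2 : ℝ) ((r' - r)/(2*(1+|r|)))
          have hpos : (0:ℝ) < 2*(1+|r|) := by positivity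
          rw [← hδdef] at hm
          calc 2*(1+|r|)*δ ≤ 2*(1+|r|) * ((r' - r)/(2*(1+|r|))) := by
                exact mul_le_mul_of_nonneg_left hm hpos.le
            _ = r' - r := by field_simp
        have hbc : ((WithLp.equiv 2 (ℝ × ℝ)).symm (1, r)) ∈
            closure (L '' (C.innerDualCone : Set _)) := by
          have h := hb
          rw [hDcl, ConvexCone.mem_closure, ConvexCone.coe_map] at h
          exact h
        obtain ⟨z, hzmem, hzd⟩ := Metric.mem_closure_iff.mp hbc δ hδpos
        obtain ⟨v, hv, rfl⟩ := hzmem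
        have hcomp : dist ((1:ℝ), r) (⟪a, v⟫_ℝ, ⟪c, v⟫_ℝ) < δ := by
          have hlip := (WithLp.prod_lipschitzWith_equiv 2 ℝ ℝ).dist_le_mul
            ((WithLp.equiv 2 (ℝ × ℝ)).symm (1, r)) (L v)
          rw [Equiv.apply_symm_apply] at hlip
          have he : WithLp.equiv 2 (ℝ × ℝ) (L v) = (⟪a, v⟫_ℝ, ⟪c, v⟫_ℝ) := rfl
          rw [he] at hlip
          simpa using lt_of_le_of_lt hlip (by simpa using hzd)
        rw [Prod.dist_eq] at hcomp
        have h1 : |1 - ⟪a, v⟫_ℝ| < δ := by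
          have := lt_of_le_of_lt (le_max_left _ _) hcomp
          rwa [Real.dist_eq] at this
        have h2 : |r - ⟪c, v⟫_ℝ| < δ := by
          have := lt_of_le_of_lt (le_max_right _ _) hcomp
          rwa [Real.dist_eq] at this
        set α : ℝ := ⟪a, v⟫_ℝ with hαdef
        set κ : ℝ := ⟪c, v⟫_ℝ with hκdef
        obtain ⟨h1l, h1r⟩ := abs_lt.mp h1
        obtain ⟨h2l, h2r⟩ := abs_lt.mp h2
        have hαpos : 0 < α := by linarith
        -- the normalized dual feasible point
        have hsum_a : ∑ i, a i * (α⁻¹ • v) i = α⁻¹ * α := by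
          rw [hαdef, stmt7_inner_eq, Finset.mul_sum]
          refine Finset.sum_congr rfl fun i _ => ?_
          simp only [PiLp.smul_apply, smul_eq_mul]
          ring
        have hwmem : (α⁻¹ • v) ∈ {v : EuclideanSpace ℝ (Fin n) |
            (∑ i, a i * v i) = 1 ∧ ∀ x ∈ C, 0 ≤ ∑ i, v i * x i} := by
          refine ⟨by rw [hsum_a, inv_mul_cancel₀ hαpos.ne'], fun x hx => ?_⟩
          have hvx : 0 ≤ ⟪x, v⟫_ℝ := (mem_innerDualCone _ _).mp hv x hx
          rw [stmt7_inner_eq] at hvx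
          have h6 : ∑ i, (α⁻¹ • v) i * x i = α⁻¹ * ∑ i, x i * v i := by
            rw [Finset.mul_sum]
            refine Finset.sum_congr rfl fun i _ => ?_
            show α⁻¹ * v i * x i = α⁻¹ * (x i * v i)
            ring
          rw [h6]
          exact mul_nonneg (inv_nonneg.mpr hαpos.le) hvx
        have hval : ∑ i, c i * (α⁻¹ • v) i = α⁻¹ * κ := by
          rw [hκdef, stmt7_inner_eq, Finset.mul_sum]
          refine Finset.sum_congr rfl fun i _ => ?_
          show c i * (α⁻¹ * v i) = α⁻¹ * (c i * v i)
          ring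
        have hsle : sInf S ≤ ((α⁻¹ * κ : ℝ) : EReal) :=
          sInf_le ⟨_, hwmem, by
            show ((∑ i, c i * (α⁻¹ • v) i : ℝ) : EReal) = _
            rw [hval]⟩
        have hfin : α⁻¹ * κ ≤ r' := by
          rw [inv_mul_le_iff₀ hαpos]
          -- κ ≤ α * r'
          nlinarith [le_abs_self r, neg_abs_le r, mul_nonneg hδpos.le habs]
        have : sInf S ≤ (r' : EReal) := le_trans hsle (EReal.coe_le_coe_iff.mpr hfin)
        exact absurd hr' (not_lt.mpr this)
      · obtain ⟨y, hy1, hy2⟩ :=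
          Dcl.hyperplane_separation_of_nonempty_of_isClosed_of_nmem hne hcl hb
        refine ⟨y.fst, y.snd, ?_, ?_⟩
        · apply hbipolar
          intro v hv
          have hm : L v ∈ Dcl := by
            rw [hDcl, ConvexCone.mem_closure]
            exact subset_closure (by rw [ConvexCone.coe_map]; exact ⟨v, hv, rfl⟩)
          have h := hy1 (L v) hm
          rw [WithLp.prod_inner_apply] at h; simp only [WithLp.ofLp_fst, WithLp.ofLp_snd] at h; rw [hLfst, hLsnd] at h
          simp only [RCLike.inner_apply, conj_trivial] at h
          have hc1 : ⟪a, v⟫_ℝ = ⟪v, a⟫_ℝ := real_inner_comm v a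
          have hc2 : ⟪c, v⟫_ℝ = ⟪v, c⟫_ℝ := real_inner_comm v c
          rw [hc1, hc2] at h
          rw [inner_add_right, real_inner_smul_right, real_inner_smul_right]
          linarith
        · have h := hy2
          rw [WithLp.prod_inner_apply] at h
          simp only [RCLike.inner_apply, conj_trivial, WithLp.equiv_symm_apply,
            WithLp.ofLp_toLp, WithLp.ofLp_fst, WithLp.ofLp_snd] at h
          -- h : y.fst * 1 + y.snd * r < 0
          linarith [h]
    obtain ⟨s, t, hmem, hst⟩ := claim
    rcases lt_trichotomy t 0 with htn | htz | htp
    · -- t < 0 : contradiction via v0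
      exfalso
      have h := hv0mem.2 _ hmem
      have hcomp : ∑ i, v0 i * (s • a + t • c) i
          = s * (∑ i, a i * v0 i) + t * (∑ i, c i * v0 i) := by
        rw [Finset.mul_sum, Finset.mul_sum, ← Finset.sum_add_distrib]
        refine Finset.sum_congr rfl fun i _ => ?_
        show v0 i * (s * a i + t * c i) = s * (a i * v0 i) + t * (c i * v0 i)
        ring
      rw [hcomp, hv0a, ← hq] at h
      -- h : 0 ≤ s * 1 + t * q
      have hrq : r < q := by
        have := lt_of_lt_of_le hr2 (sInf_le hqS)
        exact_mod_cast this
      nlinarith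
    · -- t = 0 : contradiction
      exfalso
      subst htz
      have hmem' : s • a ∈ C := by simpa using hmem
      have h := ha _ hmem'
      have hcomp : ∑ i, a i * (s • a) i = s * ∑ i, a i * a i := by
        rw [Finset.mul_sum]
        refine Finset.sum_congr rfl fun i _ => ?_
        show a i * (s * a i) = s * (a i * a i)
        ring
      rw [hcomp] at h
      have hs : s < 0 := by linarith [hst]
      nlinarith
    · -- t > 0 : get a primal feasible point above r
      exfalso
      have hγmem : c - (-s/t) • a ∈ C := by
        have h := hcone _ hmem t⁻¹ (inv_nonneg.mpr htp.le)
        have he : c - (-s/t) • a = t⁻¹ • (s • a + t • c) := by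
          ext i
          show c i - (-s/t) * a i = t⁻¹ * (s * a i + t * c i)
          field_simp
          ring
        rwa [he]
      have hle : ((-s/t : ℝ) : EReal) ≤ sSup Pim := le_sSup ⟨_, hγmem, rfl⟩
      have hgt : r < -s/t := by
        rw [lt_div_iff₀ htp]
        nlinarith
      have : (r : EReal) < sSup Pim :=
        lt_of_lt_of_le (EReal.coe_lt_coe_iff.mpr hgt) hle
      exact absurd this (not_lt.mpr hr1.le)

theorem stmt_7 (n : ℕ) (C : Set (Fin n → ℝ))
    (hclosed : IsClosed C) (hconv : Convex ℝ C) (h0 : (0 : Fin n → ℝ) ∈ C)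
    (hcone : ∀ x ∈ C, ∀ t : ℝ, 0 ≤ t → t • x ∈ C)
    (c a : Fin n → ℝ) (ha : ∀ x ∈ C, 0 ≤ ∑ i, a i * x i) (ha0 : a ≠ 0) :
    sSup ((fun γ : ℝ => (γ : EReal)) '' {γ : ℝ | c - γ • a ∈ C}) =
    sInf ((fun v : Fin n → ℝ => ((∑ i, c i * v i : ℝ) : EReal)) ''
      {v : Fin n → ℝ | (∑ i, a i * v i) = 1 ∧ ∀ x ∈ C, 0 ≤ ∑ i, v i * x i}) := by
  have key := stmt7_aux n (WithLp.ofLp ⁻¹' C) (hclosed.preimage (PiLp.continuous_ofLp 2 _))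
    (hconv.linear_preimage (WithLp.linearEquiv 2 ℝ (Fin n → ℝ)).toLinearMap) h0
    (fun x hx t ht => by show WithLp.ofLp (t • x) ∈ C; rw [WithLp.ofLp_smul]; exact hcone _ hx t ht) (WithLp.toLp 2 c) (WithLp.toLp 2 a)
    (fun x hx => ha _ hx) (by intro h; apply ha0; simpa using congrArg WithLp.ofLp h)
  have h1 : {γ : ℝ | WithLp.toLp 2 c - γ • WithLp.toLp 2 a ∈ WithLp.ofLp ⁻¹' C}
      = {γ : ℝ | c - γ • a ∈ C} := by
    ext γ; simp
  have h2 : ((fun v : EuclideanSpace ℝ (Fin n) =>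
      ((∑ i, (WithLp.toLp 2 c) i * v i : ℝ) : EReal)) ''
      {v : EuclideanSpace ℝ (Fin n) | (∑ i, (WithLp.toLp 2 a) i * v i) = 1 ∧
        ∀ x ∈ (WithLp.ofLp ⁻¹' C : Set (EuclideanSpace ℝ (Fin n))), 0 ≤ ∑ i, v i * x i}) =
      ((fun v : Fin n → ℝ => ((∑ i, c i * v i : ℝ) : EReal)) ''
      {v : Fin n → ℝ | (∑ i, a i * v i) = 1 ∧ ∀ x ∈ C, 0 ≤ ∑ i, v i * x i}) := by
    ext w
    constructor
    · rintro ⟨v, ⟨hv1, hv2⟩, rfl⟩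
      exact ⟨v.ofLp, ⟨hv1, fun x hx => hv2 (WithLp.toLp 2 x) hx⟩, rfl⟩
    · rintro ⟨v, ⟨hv1, hv2⟩, rfl⟩
      exact ⟨WithLp.toLp 2 v, ⟨hv1, fun x hx => hv2 x.ofLp hx⟩, rfl⟩
  rw [h1, h2] at key
  exact key

end Stmt7Aux
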